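/- Let N ≥ 2 and let H be an N×N Hermitian complex matrix with Tr H = 1 and ‖H − I/N‖_HS ≤ 1/√(N(N−1)). Then H is positive semidefinite; i.e., the Hilbert–Schmidt ball of radius 1/√(N(N−1)) centered at the maximally mixed state I/N, intersected with the Hermitian trace-one matrices, is contained in the set of density matrices. -/

import Mathlib

open Matrix Finset
open scoped ComplexOrder


lemma aux_arith (n S x : ℝ) (hn : 2 ≤ n) (key : x ≤ (n-1)*(S-x))
    (hvar : S ≤ (n*(n-1))⁻¹) (hbig : (n⁻¹)^2 < x) : False := by
  have hn0 : 0 < n := by linarith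
  have hn1 : 0 < n - 1 := by linarith
  have h2 : (n - 1) * (n*(n-1))⁻¹ = n⁻¹ := by field_simp
  have h3 := mul_le_mul_of_nonneg_left hvar hn1.le
  have h5 : n * n⁻¹^2 = n⁻¹ := by field_simp [sq]
  have h6 := mul_lt_mul_of_pos_left hbig hn0
  nlinarith [key, h3]

/-- **The inscribed ball of the set of density matrices.** A Hermitian matrix of trace one
within Hilbert–Schmidt distance `1/√(N(N−1))` of the maximally mixed state `I/N` is
positive semidefinite, i.e. is a density matrix. -/
theorem hermitian_near_maximally_mixed_posSemidef
    {N : ℕ} (hN : 2 ≤ N) (H : Matrix (Fin N) (Fin N) ℂ)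
    (hherm : H.IsHermitian) (htr : H.trace = 1)
    (hball : Real.sqrt (((H - (N : ℂ)⁻¹ • 1)ᴴ * (H - (N : ℂ)⁻¹ • 1)).trace.re)
      ≤ 1 / Real.sqrt ((N : ℝ) * (N - 1))) :
    H.PosSemidef := by
  set U : Matrix (Fin N) (Fin N) ℂ := (hherm.eigenvectorUnitary : Matrix (Fin N) (Fin N) ℂ) with hUdef
  have hU : U * star U = 1 := Matrix.mem_unitaryGroup_iff.mp hherm.eigenvectorUnitary.2
  have hU' : star U * U = 1 := Matrix.mem_unitaryGroup_iff'.mp hherm.eigenvectorUnitary.2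
  set lam := hherm.eigenvalues
  -- trace identity for the displaced matrix
  have hM : H - (N : ℂ)⁻¹ • 1
      = U * diagonal (fun i => (lam i : ℂ) - (N : ℂ)⁻¹) * star U := by
    have h1 : U * ((N : ℂ)⁻¹ • (1 : Matrix (Fin N) (Fin N) ℂ)) * star U
        = (N : ℂ)⁻¹ • 1 := by
      rw [Matrix.mul_smul, Matrix.mul_one, Matrix.smul_mul, hU]
    calc H - (N : ℂ)⁻¹ • 1
        = U * diagonal ((↑) ∘ lam) * star U
          - U * ((N : ℂ)⁻¹ • 1) * star U := by
          rw [h1]; congr 1; exact hherm.spectral_theorem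
      _ = U * (diagonal ((↑) ∘ lam) - (N : ℂ)⁻¹ • 1) * star U := by
          rw [Matrix.mul_sub, Matrix.sub_mul]
      _ = _ := by
          congr 2
          ext i k
          by_cases h : i = k <;>
            simp [h, Matrix.smul_apply, Matrix.one_apply, Matrix.diagonal_apply]
  have htrM : ((H - (N : ℂ)⁻¹ • 1)ᴴ * (H - (N : ℂ)⁻¹ • 1)).trace.re
      = ∑ i, (lam i - (N : ℝ)⁻¹) ^ 2 := by
    set v : Fin N → ℂ := fun i => (lam i : ℂ) - (N : ℂ)⁻¹ with hv
    have hDstar : star (diagonal v) = diagonal (star v) := by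
      rw [Matrix.star_eq_conjTranspose, diagonal_conjTranspose]
    rw [hM, ← Matrix.star_eq_conjTranspose]
    simp only [Matrix.star_mul, star_star, Matrix.mul_assoc]
    rw [← Matrix.mul_assoc (star U) U, hU', Matrix.one_mul]
    rw [Matrix.trace_mul_comm, ← Matrix.mul_assoc, Matrix.mul_assoc,
      hU', Matrix.mul_one, hDstar, diagonal_mul_diagonal, trace_diagonal, Complex.re_sum]
    congr 1; funext i
    have hvr : v i = ((lam i - (N:ℝ)⁻¹ : ℝ) : ℂ) := by
      simp [hv, ← Complex.ofReal_natCast, ← Complex.ofReal_inv]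
    simp only [Pi.star_apply, hvr, ← Complex.ofReal_mul, Complex.ofReal_re, sq,
      Complex.star_def, Complex.conj_ofReal]
  -- sum of eigenvalues = 1
  have hsum : ∑ i, lam i = 1 := by
    have : H.trace = ∑ i, (lam i : ℂ) := by
      conv_lhs => rw [hherm.spectral_theorem]
      rw [Unitary.conjStarAlgAut_apply, ← hUdef, Matrix.trace_mul_cycle, hU']
      simp [Matrix.trace_diagonal, lam]
    rw [htr] at this
    have := congrArg Complex.re this.symm
    simpa [Complex.re_sum] using this
  -- the ball condition gives the variance bound
  have hNpos : (0:ℝ) < N := by positivity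
  have hN1 : (0:ℝ) < (N:ℝ) - 1 := by
    have : (2:ℝ) ≤ N := by exact_mod_cast hN
    linarith
  have hden : (0:ℝ) < (N:ℝ) * ((N:ℝ) - 1) := by positivity
  have hvar : ∑ i, (lam i - (N : ℝ)⁻¹) ^ 2 ≤ ((N:ℝ) * ((N:ℝ) - 1))⁻¹ := by
    have h0 : (0:ℝ) ≤ ∑ i, (lam i - (N : ℝ)⁻¹) ^ 2 := by positivity
    have h2 : Real.sqrt (∑ i, (lam i - (N : ℝ)⁻¹) ^ 2) ≤ 1 / Real.sqrt ((N : ℝ) * (N - 1)) := by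
      rw [← htrM]; exact hball
    calc ∑ i, (lam i - (N : ℝ)⁻¹) ^ 2
        = Real.sqrt (∑ i, (lam i - (N : ℝ)⁻¹) ^ 2) ^ 2 := (Real.sq_sqrt h0).symm
      _ ≤ (1 / Real.sqrt ((N : ℝ) * (N - 1))) ^ 2 := by
          apply pow_le_pow_left₀ (Real.sqrt_nonneg _) h2
      _ = ((N:ℝ) * ((N:ℝ) - 1))⁻¹ := by
          rw [div_pow, one_pow, Real.sq_sqrt hden.le, one_div]
  -- eigenvalues nonneg
  apply hherm.posSemidef_iff_eigenvalues_nonneg.mpr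
  intro j
  by_contra hneg
  push_neg at hneg
  change lam j < 0 at hneg
  set mu : Fin N → ℝ := fun i => lam i - (N : ℝ)⁻¹ with hmu
  have hmusum : ∑ i, mu i = 0 := by
    simp only [hmu, Finset.sum_sub_distrib, hsum, Finset.sum_const, card_univ,
      Fintype.card_fin, nsmul_eq_mul]
    rw [mul_inv_cancel₀ hNpos.ne']
    ring
  have hmuj : mu j < -(N:ℝ)⁻¹ := by
    simp only [hmu]
    have : (0:ℝ) < (N:ℝ)⁻¹ := by positivity
    linarith
  -- Cauchy-Schwarz on the complement
  have hsplit : ∑ i ∈ univ.erase j, mu i = -mu j := by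
    have h : mu j + ∑ i ∈ univ.erase j, mu i = ∑ i, mu i :=
      Finset.add_sum_erase univ mu (mem_univ j)
    linarith [hmusum]
  have hCS : (∑ i ∈ univ.erase j, mu i) ^ 2
      ≤ (univ.erase j).card * ∑ i ∈ univ.erase j, mu i ^ 2 :=
    sq_sum_le_card_mul_sum_sq
  have hcard : ((univ.erase j).card : ℝ) = (N:ℝ) - 1 := by
    rw [Finset.card_erase_of_mem (mem_univ j), card_univ, Fintype.card_fin]
    have : 1 ≤ N := le_trans one_le_two hN
    push_cast [Nat.cast_sub this]
    ring
  have herase : ∑ i ∈ univ.erase j, mu i ^ 2 = (∑ i, mu i ^ 2) - mu j ^ 2 := by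
    have h : mu j ^ 2 + ∑ i ∈ univ.erase j, mu i ^ 2 = ∑ i, mu i ^ 2 :=
      Finset.add_sum_erase univ (fun i => mu i ^ 2) (mem_univ j)
    linarith
  have key : mu j ^ 2 ≤ ((N:ℝ) - 1) * ((∑ i, mu i ^ 2) - mu j ^ 2) := by
    calc mu j ^ 2 = (-mu j) ^ 2 := by ring
      _ = (∑ i ∈ univ.erase j, mu i) ^ 2 := by rw [hsplit]
      _ ≤ (univ.erase j).card * ∑ i ∈ univ.erase j, mu i ^ 2 := hCS
      _ = ((N:ℝ) - 1) * ((∑ i, mu i ^ 2) - mu j ^ 2) := by rw [hcard, herase]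
  exact aux_arith (N:ℝ) (∑ i, mu i ^ 2) (mu j ^ 2)
    (by exact_mod_cast hN) key hvar
    (by
      have h1 : (0:ℝ) < (N:ℝ)⁻¹ := by positivity
      nlinarith [hmuj])
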